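/- Let F be the Arikan kernel over F_2, m ≥ 1, A = F^{⊗m}, and 0 ≤ r < m. Let R_r ⊆ F_2^{2^m} be the linear span of the rows of A whose indices i satisfy wt(i) > r (this is the Reed–Muller code of order m−r−1 and length 2^m). Then the dynamic frozen index set of R_r with respect to A satisfies F_A(R_r) = { i : 0 ≤ i < 2^m, wt(i) ≤ r }; that is, the Reed–Muller code of order m−r−1 is the polar code with frozen symbol index set { i : wt(i) ≤ r }. -/

import Mathlib

/-- The binary weight `wt i`: the number of ones in the binary expansion of `i`. -/
def wt (i : ℕ) : ℕ := (Nat.digits 2 i).sum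

/-- The Arikan kernel: the 2×2 matrix over `F_2` with rows `(1,0)` and `(1,1)`. -/
def arikanKernel : Matrix (Fin 2) (Fin 2) (ZMod 2) := !![1, 0; 1, 1]

/-- The `m`-fold Kronecker power of the Arikan kernel, a `2^m × 2^m` matrix over `F_2`.
The index pair `(a, b)` of the Kronecker product `F ⊗ F^{⊗m}` is identified with the
integer `a·2^m + b`, i.e. `a = i / 2^m` and `b = i % 2^m`. -/
def arikanKronPow : (m : ℕ) → Matrix (Fin (2 ^ m)) (Fin (2 ^ m)) (ZMod 2)
  | 0 => 1
  | m + 1 => Matrix.of fun i j =>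
      arikanKernel ⟨i.val / 2 ^ m, Nat.div_lt_of_lt_mul (by rw [← pow_succ]; exact i.isLt)⟩
          ⟨j.val / 2 ^ m, Nat.div_lt_of_lt_mul (by rw [← pow_succ]; exact j.isLt)⟩ *
        arikanKronPow m ⟨i.val % 2 ^ m, Nat.mod_lt _ (by positivity)⟩
          ⟨j.val % 2 ^ m, Nat.mod_lt _ (by positivity)⟩

/-- The dynamic frozen index set `F_A(C)` of a linear code `C ⊆ F_q^n` with respect to an
invertible matrix `A`: the set of indices `t` that arise as the last nonzero position of
some nonzero vector `v` in the orthogonal complement (w.r.t. the standard bilinear form)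
of the subspace `{u : uA ∈ C}`. -/
def frozenSet {F : Type*} [Field F] {n : ℕ} (A : Matrix (Fin n) (Fin n) F)
    (C : Submodule F (Fin n → F)) : Set (Fin n) :=
  {t | ∃ v : Fin n → F,
    (∀ u : Fin n → F, Matrix.vecMul u A ∈ C → ∑ s, u s * v s = 0) ∧
    v ≠ 0 ∧ v t ≠ 0 ∧ ∀ s, t < s → v s = 0}

/- ------------ auxiliary lemmas ------------- -/

lemma arikanKernel_diag : ∀ a b : Fin 2, a.val = b.val → arikanKernel a b = 1 := by
  intro a b h; fin_cases a <;> fin_cases b <;> simp_all [arikanKernel]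

lemma arikanKernel_lt : ∀ a b : Fin 2, a.val < b.val → arikanKernel a b = 0 := by
  intro a b h; fin_cases a <;> fin_cases b <;> simp_all [arikanKernel]

lemma arikanKronPow_diag : ∀ (m : ℕ) (i j : Fin (2 ^ m)), i.val = j.val →
    arikanKronPow m i j = 1 := by
  intro m
  induction m with
  | zero => intro i j h; rw [show i = j from Fin.ext h]; simp [arikanKronPow]
  | succ m ih =>
    intro i j h
    simp only [arikanKronPow, Matrix.of_apply]
    rw [arikanKernel_diag _ _ (by simp [h]), ih _ _ (by simp [h]), mul_one]

lemma arikanKronPow_lt : ∀ (m : ℕ) (i j : Fin (2 ^ m)), i.val < j.val →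
    arikanKronPow m i j = 0 := by
  intro m
  induction m with
  | zero =>
    intro i j h
    have := i.isLt; have := j.isLt
    omega
  | succ m ih =>
    intro i j h
    simp only [arikanKronPow, Matrix.of_apply]
    rcases lt_or_eq_of_le (Nat.div_le_div_right (c := 2 ^ m) h.le) with hq | hq
    · rw [arikanKernel_lt _ _ hq, zero_mul]
    · have h1 := Nat.div_add_mod i.val (2 ^ m)
      have h2 := Nat.div_add_mod j.val (2 ^ m)
      have hq' : 2 ^ m * (i.val / 2 ^ m) = 2 ^ m * (j.val / 2 ^ m) := by rw [hq]
      have : i.val % 2 ^ m < j.val % 2 ^ m := by omega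
      rw [ih _ _ this, mul_zero]

lemma arikanKronPow_isUnit (m : ℕ) : IsUnit (arikanKronPow m) := by
  apply (Matrix.isUnit_iff_isUnit_det _).2
  have : (arikanKronPow m).det = 1 := by
    rw [Matrix.det_of_lowerTriangular _ (fun i j hij => arikanKronPow_lt m i j hij)]
    exact Finset.prod_eq_one fun i _ => arikanKronPow_diag m i i rfl
  rw [this]; exact isUnit_one

/-- The submodule of vectors vanishing on all coordinates of weight `≤ r`. -/
def wtSupp (r m : ℕ) : Submodule (ZMod 2) (Fin (2 ^ m) → ZMod 2) where
  carrier := {u | ∀ s, wt s.val ≤ r → u s = 0}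
  add_mem' := by intro a b ha hb s hs; simp [ha s hs, hb s hs]
  zero_mem' := by intro s _; rfl
  smul_mem' := by intro c a ha s hs; simp [ha s hs]

/-- Let `A = F^{⊗m}` and let `R_r` be the span of the rows of `A` whose
indices have binary weight `> r` (the Reed–Muller code of order `m−r−1`). Then
`F_A(R_r) = { i : wt(i) ≤ r }`: the Reed–Muller code is the polar code with frozen symbol
index set `{ i : wt(i) ≤ r }`. -/
theorem frozenSet_reed_muller {m r : ℕ} (hm : 1 ≤ m) (hr : r < m) :
    frozenSet (arikanKronPow m)
      (Submodule.span (ZMod 2)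
        {v | ∃ i : Fin (2 ^ m), r < wt i.val ∧ v = arikanKronPow m i}) =
      {i : Fin (2 ^ m) | wt i.val ≤ r} := by
  classical
  set A := arikanKronPow m with hA
  set S : Set (Fin (2 ^ m) → ZMod 2) :=
    {v | ∃ i : Fin (2 ^ m), r < wt i.val ∧ v = arikanKronPow m i} with hS
  have hinj : Function.Injective A.vecMul :=
    Matrix.vecMul_injective_iff_isUnit.2 (arikanKronPow_isUnit m)
  -- key characterization: `u ᵥ* A ∈ span S → u` vanishes on weight-≤-r coordinates
  have key : ∀ u : Fin (2 ^ m) → ZMod 2,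
      Matrix.vecMul u A ∈ Submodule.span (ZMod 2) S →
      ∀ s : Fin (2 ^ m), wt s.val ≤ r → u s = 0 := by
    intro u hu
    have hle : Submodule.span (ZMod 2) S ≤ (wtSupp r m).map A.vecMulLinear := by
      apply Submodule.span_le.2
      rintro v ⟨i, hi, rfl⟩
      refine ⟨Pi.single i 1, fun s hs => ?_, ?_⟩
      · exact Pi.single_eq_of_ne (fun e => absurd (e ▸ hi) (not_lt.2 hs)) 1
      · rw [Matrix.vecMulLinear_apply, Matrix.single_one_vecMul]; exact rfl
    obtain ⟨u', hu', he⟩ := hle hu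
    have : u' = u := hinj he
    exact this ▸ hu'
  ext t
  simp only [frozenSet, Set.mem_setOf_eq]
  constructor
  · rintro ⟨v, hperp, hv0, hvt, hlast⟩
    by_contra h
    push_neg at h
    have hu : Matrix.vecMul (Pi.single t 1) A ∈ Submodule.span (ZMod 2) S := by
      rw [Matrix.single_one_vecMul]
      exact Submodule.subset_span ⟨t, h, rfl⟩
    have h0 := hperp _ hu
    rw [Finset.sum_eq_single t (fun s _ hst => by
        rw [Pi.single_eq_of_ne hst, zero_mul]) (by simp)] at h0
    simp at h0
    exact hvt h0
  · intro ht
    refine ⟨Pi.single t 1, ?_, ?_, ?_, ?_⟩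
    · intro u hu
      rw [Finset.sum_eq_single t (fun s _ hst => by
          rw [Pi.single_eq_of_ne hst, mul_zero]) (by simp)]
      rw [key u hu t ht, zero_mul]
    · intro h
      have := congrFun h t
      simp at this
    · simp
    · intro s hs
      exact Pi.single_eq_of_ne hs.ne' 1
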